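/- arXiv:2510.22012 — 2 statements merged into one kernel-verified Lean document; each statement's English description precedes it below -/
import Mathlib

section
/- The canonical nonlinear connection N^i_j = ∂G^i/∂y^j of the semispray G^i(x,y) = −(1/2)[Σ_j(∂X^i/∂x^j − ∂X^j/∂x^i)y^j + Σ_j(∂X^j/∂x^i)X^j] equals, as a matrix, N = −(1/2)(J − J^t), where J = (∂X^i/∂x^j) is the Jacobian matrix of X; in particular N is skew-symmetric. -/
/-- Partial derivative of a scalar function on ℝⁿ in the j-th coordinate direction. -/
noncomputable def pd {n : ℕ} (j : Fin n) (f : (Fin n → ℝ) → ℝ) (x : Fin n → ℝ) : ℝ :=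
  fderiv ℝ f x (Pi.single j 1)

lemma fderiv_affine {n : ℕ} (a : Fin n → ℝ) (c : ℝ) (j : Fin n) :
    fderiv ℝ (fun y : Fin n → ℝ => -(1 / 2 : ℝ) * ((∑ k, a k * y k) + c)) 0
      (Pi.single j 1) = -(1 / 2) * a j := by
  have h : HasFDerivAt (fun y : Fin n → ℝ => -(1 / 2 : ℝ) * ((∑ k, a k * y k) + c))
      ((-(1 / 2 : ℝ)) • ∑ k, a k • (ContinuousLinearMap.proj k :
        (Fin n → ℝ) →L[ℝ] ℝ)) 0 := by
    apply HasFDerivAt.const_mul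
    apply HasFDerivAt.add_const
    apply HasFDerivAt.fun_sum
    intro k _
    exact ((ContinuousLinearMap.proj k : (Fin n → ℝ) →L[ℝ] ℝ).hasFDerivAt).const_mul (a k)
  rw [h.fderiv]
  simp only [ContinuousLinearMap.smul_apply, ContinuousLinearMap.sum_apply,
    ContinuousLinearMap.proj_apply, smul_eq_mul]
  rw [Finset.sum_eq_single j]
  · simp
  · intro b _ hb; simp [Pi.single_apply, hb]
  · simp

/-- The canonical nonlinear connection Nⁱⱼ = ∂Gⁱ/∂yʲ of the semispray
Gⁱ(x,y) = −(1/2)[Σⱼ (∂Xⁱ/∂xʲ − ∂Xʲ/∂xⁱ)yʲ + Σⱼ (∂Xʲ/∂xⁱ)Xʲ] equals, as a matrix,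
N = −(1/2)(J − Jᵀ) where J is the Jacobian of X; in particular N is skew-symmetric. -/
theorem nonlinear_connection_eq_skew_jacobian
    (n : ℕ) (X : (Fin n → ℝ) → (Fin n → ℝ)) (hX : ContDiff ℝ 2 X)
    (J : (Fin n → ℝ) → Matrix (Fin n) (Fin n) ℝ)
    (hJ : ∀ x i j, J x i j = pd j (fun x' => X x' i) x)
    (G : Fin n → (Fin n → ℝ) → (Fin n → ℝ) → ℝ)
    (hG : ∀ i x y, G i x y =
      -(1 / 2) * ((∑ j, (J x i j - J x j i) * y j) + ∑ j, J x j i * X x j))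
    (Nc : (Fin n → ℝ) → Matrix (Fin n) (Fin n) ℝ)
    (hN : ∀ x i j, Nc x i j = fderiv ℝ (fun y => G i x y) 0 (Pi.single j 1)) :
    ∀ x, (Nc x = ((-1 : ℝ) / 2) • (J x - (J x).transpose)) ∧ (Nc x).transpose = -(Nc x) := by
  intro x
  have key : ∀ i j, Nc x i j = -(1 / 2) * (J x i j - J x j i) := by
    intro i j
    rw [hN]
    have : (fun y => G i x y) =
        fun y : Fin n → ℝ => -(1 / 2 : ℝ) *
          ((∑ k, (J x i k - J x k i) * y k) + ∑ k, J x k i * X x k) := by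
      funext y; exact hG i x y
    rw [this, fderiv_affine]
  constructor
  · ext i j
    simp only [Matrix.smul_apply, Matrix.sub_apply, Matrix.transpose_apply, smul_eq_mul, key]
    ring
  · ext i j
    simp only [Matrix.transpose_apply, Matrix.neg_apply, key]
    ring
end

section
/- Every solution of the ODE system dx/dt = X(x) also solves the Euler–Lagrange geodesic-type equations d²x^k/dt² + 2G^k(x, dx/dt) = 0, where G^k = −(1/2)[Σ_j(∂X^k/∂x^j − ∂X^j/∂x^k)(dx^j/dt) + Σ_j(∂X^j/∂x^k)X^j(x)]. -/
/-- Every solution of dx/dt = X(x) also solves the Euler–Lagrange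
geodesic-type equations d²xᵏ/dt² + 2Gᵏ(x, dx/dt) = 0, where
Gᵏ = −(1/2)[Σⱼ (∂Xᵏ/∂xʲ − ∂Xʲ/∂xᵏ)(dxʲ/dt) + Σⱼ (∂Xʲ/∂xᵏ)Xʲ(x)]. -/
theorem ode_solution_solves_euler_lagrange
    (n : ℕ) (X : (Fin n → ℝ) → (Fin n → ℝ)) (hX : ContDiff ℝ 1 X)
    (hX' : ∀ i, ContDiff ℝ 1 (fun x => fderiv ℝ (fun x' => X x' i) x))
    (G : Fin n → (Fin n → ℝ) → (Fin n → ℝ) → ℝ)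
    (hG : ∀ k x y, G k x y =
      -(1 / 2) * ((∑ j, (pd j (fun x' => X x' k) x - pd k (fun x' => X x' j) x) * y j)
        + ∑ j, pd k (fun x' => X x' j) x * X x j))
    (x : ℝ → (Fin n → ℝ)) (hx : ContDiff ℝ 2 x)
    (hsol : ∀ t, deriv x t = X (x t)) :
    ∀ k t, deriv (deriv x) t k + 2 * G k (x t) (deriv x t) = 0 := by
  intro k t
  have hXk : ∀ j, ContDiff ℝ 1 (fun x' => X x' j) := fun j => (contDiff_pi.1 hX j)
  have hxd : Differentiable ℝ x := hx.differentiable (by norm_num)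
  have hx' : HasDerivAt x (X (x t)) t := by
    have := (hxd t).hasDerivAt
    rwa [hsol t] at this
  have hXx : ∀ j, HasDerivAt (fun s => X (x s) j)
      (fderiv ℝ (fun x' => X x' j) (x t) (X (x t))) t := fun j =>
    (((hXk j).differentiable one_ne_zero (x t)).hasFDerivAt).comp_hasDerivAt t hx'
  have hpi : HasDerivAt (fun s => X (x s))
      (fun j => fderiv ℝ (fun x' => X x' j) (x t) (X (x t))) t :=
    hasDerivAt_pi.2 hXx
  have hdd : deriv (deriv x) t k = fderiv ℝ (fun x' => X x' k) (x t) (X (x t)) := by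
    have : deriv x = fun s => X (x s) := funext hsol
    rw [this, hpi.deriv]
  -- express fderiv applied to vector as a sum of partials
  have hL : ∀ (f : (Fin n → ℝ) → ℝ) (hf : Differentiable ℝ f) (v : Fin n → ℝ),
      fderiv ℝ f (x t) v = ∑ j, v j * pd j f (x t) := by
    intro f hf v
    have hv : v = ∑ j, v j • (Pi.single j 1 : Fin n → ℝ) := by
      ext i
      simp [Finset.sum_apply, Pi.single_apply]
    conv_lhs => rw [hv]
    rw [map_sum]
    simp [pd, smul_eq_mul]
  rw [hdd, hL _ ((hXk k).differentiable one_ne_zero) _, hG, hsol]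
  have cancel : ∀ (a b c : Fin n → ℝ),
      (∑ j, c j * a j) + 2 * (-(1/2) * ((∑ j, (a j - b j) * c j) + ∑ j, b j * c j)) = 0 := by
    intro a b c
    rw [← Finset.sum_add_distrib]
    have : ∀ j ∈ Finset.univ, (a j - b j) * c j + b j * c j = c j * a j := by
      intro j _; ring
    rw [Finset.sum_congr rfl this]
    ring
  exact cancel (fun j => pd j (fun x' => X x' k) (x t))
    (fun j => pd k (fun x' => X x' j) (x t)) (X (x t))
end
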